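/- Let $0 < c < 1$ and let $b > 0$ be sufficiently small (depending on $c$). Let $A_1, \dots, A_n \in SL_2(\mathbb{C})$ and $0 < \delta_j < b$ for $1 \le j \le n$ satisfy: (i) $\delta_{j+1} \le \delta_j + b\delta_j^{3/2}$ for $1 \le j \le n-1$; (ii) $\|A_{j+1} - A_j\| \le b\delta_j$ for $1 \le j \le n-1$; (iii) $|\mathrm{Tr}\, A_j| \ge 2 + (1-b)\delta_j$ for $1 \le j \le n$. Then for any vector $u_0 \in \mathbb{C}^2$ with $\|A_1 u_0\| \ge \exp((1-c)\sqrt{\delta_1})\|u_0\|$, one has $\|A_n \cdots A_1 u_0\| \ge \exp\big((1-c)\sum_{j=1}^n \sqrt{\delta_j}\big)\|u_0\|$. -/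

import Mathlib

set_option maxHeartbeats 1000000

lemma aval_key (c b d d' : ℝ) (hc0 : 0 < c) (hc1 : c < 1)
    (hb : 0 < b) (hb1 : b < 1) (hb2 : b < c^2) (hb3 : b < c/16)
    (hd : 0 < d) (hdb : d < b) (hd' : 0 ≤ d')
    (hstep : d' ≤ d + b * d ^ ((3:ℝ)/2)) :
    Real.exp ((1-c) * Real.sqrt d') + Real.exp (-((1-c) * Real.sqrt d)) + b * d
      ≤ 2 + (1-b) * d := by
  have hsd := Real.sqrt_nonneg d
  have hsq : Real.sqrt d ^ 2 = d := Real.sq_sqrt hd.le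
  have h32 : d ^ ((3:ℝ)/2) = d * Real.sqrt d := by
    rw [show (3:ℝ)/2 = 1 + 1/2 by norm_num, Real.rpow_add hd, Real.rpow_one,
      ← Real.sqrt_eq_rpow]
  have hA : Real.sqrt d' ≤ Real.sqrt d + (b/2) * d := by
    have hexp : (Real.sqrt d + (b/2) * d)^2 = d + b * (d * Real.sqrt d) + (b/2*d)^2 := by
      linear_combination hsq
    have h1 : d' ≤ (Real.sqrt d + (b/2) * d)^2 := by
      rw [h32] at hstep; nlinarith [sq_nonneg (b/2*d)]
    calc Real.sqrt d' ≤ Real.sqrt ((Real.sqrt d + (b/2) * d)^2) := Real.sqrt_le_sqrt h1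
      _ = Real.sqrt d + (b/2) * d := Real.sqrt_sq (by nlinarith)
  set s := (1-c) * Real.sqrt d with hs
  have hs0 : 0 ≤ s := mul_nonneg (by linarith) hsd
  have hsd1 : Real.sqrt d ≤ 1 := Real.sqrt_le_one.2 (by linarith)
  have hs1 : s ≤ 1 := by nlinarith
  have hsb : Real.sqrt d ≤ Real.sqrt b := Real.sqrt_le_sqrt hdb.le
  have hsbc : Real.sqrt b < c := by
    have := Real.sqrt_lt_sqrt hb.le hb2
    rwa [Real.sqrt_sq hc0.le] at this
  have hb1' : |s| ≤ 1 := by rw [abs_of_nonneg hs0]; exact hs1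
  have hb2' : |(-s)| ≤ 1 := by rwa [abs_neg]
  have e1 := Real.exp_bound hb1' (n := 3) (by norm_num)
  have e2 := Real.exp_bound hb2' (n := 3) (by norm_num)
  rw [abs_of_nonneg hs0] at e1
  rw [abs_neg, abs_of_nonneg hs0] at e2
  simp only [Finset.sum_range_succ, Finset.sum_range_zero] at e1 e2
  norm_num [Nat.factorial] at e1 e2
  have ecosh : Real.exp s + Real.exp (-s) ≤ 2 + s^2 + (4/9) * s^3 := by
    have h1 := abs_le.1 e1
    have h2 := abs_le.1 e2
    have hs3 : 0 ≤ s^3 := by positivity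
    nlinarith [h1.2, h2.2]
  set ε := (1-c) * ((b/2) * d) with hε
  have hε0 : 0 ≤ ε := mul_nonneg (by linarith) (mul_nonneg (by linarith) hd.le)
  have hε1 : ε ≤ 1/2 := by nlinarith [mul_nonneg hb.le hd.le]
  have ht' : (1-c) * Real.sqrt d' ≤ s + ε := by
    calc (1-c) * Real.sqrt d' ≤ (1-c) * (Real.sqrt d + (b/2) * d) :=
          mul_le_mul_of_nonneg_left hA (by linarith)
      _ = s + ε := by rw [hs, hε]; ring
  have h3 : (1-ε) * Real.exp ε ≤ 1 := by
    have h := Real.add_one_le_exp (-ε)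
    have h' : Real.exp (-ε) * Real.exp ε = 1 := by rw [← Real.exp_add]; norm_num
    nlinarith [Real.exp_pos ε]
  have h5 : Real.exp ε ≤ 2 := by nlinarith [Real.exp_pos ε]
  have h6 : Real.exp s ≤ 3 := by
    calc Real.exp s ≤ Real.exp 1 := Real.exp_le_exp.2 hs1
      _ ≤ 3 := by nlinarith [Real.exp_one_lt_d9]
  have eshift : Real.exp ((1-c) * Real.sqrt d') ≤ Real.exp s + 6 * ε := by
    have h1 : Real.exp ((1-c) * Real.sqrt d') ≤ Real.exp s * Real.exp ε := by
      rw [← Real.exp_add]; exact Real.exp_le_exp.2 ht'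
    nlinarith [Real.exp_pos s, Real.exp_pos ε]
  have hss : s^2 = (1-c)^2 * d := by rw [hs]; nlinarith
  have hs3 : s^3 ≤ d * Real.sqrt b := by
    have h7 : s ≤ Real.sqrt b := by nlinarith
    have h8 : s^2 ≤ d := by
      have := mul_nonneg (mul_nonneg hc0.le hd.le) (by linarith : (0:ℝ) ≤ 2 - c)
      nlinarith [hss]
    calc s^3 = s^2 * s := by ring
      _ ≤ d * Real.sqrt b := mul_le_mul h8 h7 hs0 hd.le
  have hcc : (1-c)^2 ≤ 1 - c := by
    linarith [mul_nonneg hc0.le (by linarith : (0:ℝ) ≤ 1 - c)]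
  have h6e : 6*ε ≤ 3*(b*d) := by nlinarith [mul_nonneg hb.le hd.le]
  have hfin : ((1-c)^2 + (4/9)*Real.sqrt b + 5*b) * d ≤ 1 * d := by
    have : (1-c)^2 + (4/9)*Real.sqrt b + 5*b ≤ 1 := by linarith
    exact mul_le_mul_of_nonneg_right this hd.le
  linarith [eshift, ecosh, hs3, h6e, hfin, hss]

lemma aval_cayley (A : Matrix (Fin 2) (Fin 2) ℂ) (h : A.det = 1) :
    A * A = A.trace • A - 1 := by
  rw [Matrix.det_fin_two] at h
  ext i j
  fin_cases i <;> fin_cases j <;>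
    simp [Matrix.mul_apply, Matrix.trace, Fin.sum_univ_two, Matrix.one_apply,
      Matrix.smul_apply, smul_eq_mul] <;>
    first
      | ring1
      | linear_combination -h



/-- Avalanche principle for weakly hyperbolic products of `SL₂(ℂ)` matrices: for `0 < c < 1`
and sufficiently small `b > 0`, if `0 < δ_j < b`, `δ_{j+1} ≤ δ_j + b δ_j^{3/2}`,
`‖A_{j+1} - A_j‖ ≤ b δ_j`, `|Tr A_j| ≥ 2 + (1-b) δ_j`, and
`‖A₁ u₀‖ ≥ exp((1-c)√δ₁) ‖u₀‖`, then
`‖A_n ⋯ A₁ u₀‖ ≥ exp((1-c) ∑_j √δ_j) ‖u₀‖`. Matrices act on `ℂ²` with its Euclidean norm,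
and `‖·‖` on matrices is the associated operator norm. -/
theorem avalanche (c : ℝ) (hc0 : 0 < c) (hc1 : c < 1) :
    ∃ b₀ > 0, ∀ b : ℝ, 0 < b → b < b₀ →
      ∀ (n : ℕ) (hn : 0 < n) (A : Fin n → Matrix (Fin 2) (Fin 2) ℂ) (δ : Fin n → ℝ),
        (∀ j, (A j).det = 1) →
        (∀ j, 0 < δ j ∧ δ j < b) →
        (∀ (j : ℕ) (h : j + 1 < n),
          δ ⟨j + 1, h⟩ ≤ δ ⟨j, Nat.lt_of_succ_lt h⟩
            + b * δ ⟨j, Nat.lt_of_succ_lt h⟩ ^ ((3 : ℝ) / 2)) →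
        (∀ (j : ℕ) (h : j + 1 < n),
          ‖Matrix.toEuclideanCLM (𝕜 := ℂ) (A ⟨j + 1, h⟩ - A ⟨j, Nat.lt_of_succ_lt h⟩)‖
            ≤ b * δ ⟨j, Nat.lt_of_succ_lt h⟩) →
        (∀ j, 2 + (1 - b) * δ j ≤ ‖(A j).trace‖) →
        ∀ u₀ : EuclideanSpace ℂ (Fin 2),
          Real.exp ((1 - c) * Real.sqrt (δ ⟨0, hn⟩)) * ‖u₀‖
              ≤ ‖Matrix.toEuclideanCLM (𝕜 := ℂ) (A ⟨0, hn⟩) u₀‖ →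
          Real.exp ((1 - c) * ∑ j, Real.sqrt (δ j)) * ‖u₀‖
            ≤ ‖Matrix.toEuclideanCLM (𝕜 := ℂ) ((List.ofFn A).reverse.prod) u₀‖ := by
  refine ⟨min (c^2) (min (c/16) 1), lt_min (by positivity) (lt_min (by positivity) one_pos), ?_⟩
  intro b hb0 hbm n hn A δ hdet hδ hδstep hAstep htr u₀ hu₀
  have hb2 : b < c^2 := lt_of_lt_of_le hbm (min_le_left _ _)
  have hb3 : b < c/16 := lt_of_lt_of_le hbm ((min_le_right _ _).trans (min_le_left _ _))
  have hb1 : b < 1 := lt_of_lt_of_le hbm ((min_le_right _ _).trans (min_le_right _ _))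
  classical
  let g : ℕ → (EuclideanSpace ℂ (Fin 2) →L[ℂ] EuclideanSpace ℂ (Fin 2)) :=
    fun k => if h : k < n then Matrix.toEuclideanCLM (𝕜 := ℂ) (A ⟨k, h⟩) else 1
  let v : ℕ → EuclideanSpace ℂ (Fin 2) := fun k => Nat.rec u₀ (fun k vk => g k vk) k
  have hv0 : v 0 = u₀ := rfl
  have hvs : ∀ k, v (k+1) = g k (v k) := fun k => rfl
  have hg : ∀ (k) (h : k < n), g k = Matrix.toEuclideanCLM (𝕜 := ℂ) (A ⟨k, h⟩) := by
    intro k h; simp only [g, dif_pos h]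
  -- expansion from Cayley-Hamilton
  have expand : ∀ (k) (h : k < n) (x : EuclideanSpace ℂ (Fin 2)),
      ‖(A ⟨k,h⟩).trace‖ * ‖g k x‖ - ‖x‖ ≤ ‖g k (g k x)‖ := by
    intro k h x
    rw [hg k h]
    set B := A ⟨k,h⟩ with hB
    set f := Matrix.toEuclideanCLM (𝕜 := ℂ) B with hf
    have hC : f (f x) = B.trace • f x - x := by
      calc f (f x) = (f * f) x := rfl
        _ = (Matrix.toEuclideanCLM (𝕜 := ℂ) (B * B)) x := by rw [map_mul]
        _ = (Matrix.toEuclideanCLM (𝕜 := ℂ) (B.trace • B - 1)) x := by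
              rw [aval_cayley B (hdet ⟨k,h⟩)]
        _ = B.trace • f x - x := by
              rw [map_sub, map_smul, map_one]
              simp [ContinuousLinearMap.sub_apply, ContinuousLinearMap.smul_apply,
                ContinuousLinearMap.one_apply, hf]
    have h3 : B.trace • f x = f (f x) + x := by rw [hC]; abel
    have h4 : ‖B.trace • f x‖ ≤ ‖f (f x)‖ + ‖x‖ := by
      rw [h3]; exact norm_add_le _ _
    rw [norm_smul] at h4
    linarith
  -- the key invariant
  have inv : ∀ k (h : k < n),
      Real.exp ((1-c) * Real.sqrt (δ ⟨k,h⟩)) * ‖v k‖ ≤ ‖v (k+1)‖ := by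
    intro k
    induction k with
    | zero =>
      intro h
      rw [hvs 0, hv0, hg 0 h]
      exact hu₀
    | succ k ih =>
      intro h
      have hk : k < n := Nat.lt_of_succ_lt h
      have ihk := ih hk
      have hd := hδ ⟨k, hk⟩
      have hd' := hδ ⟨k+1, h⟩
      have key := aval_key c b (δ ⟨k,hk⟩) (δ ⟨k+1,h⟩) hc0 hc1 hb0 hb1 hb2 hb3
        hd.1 hd.2 hd'.1.le (hδstep k h)
      have hwpos : (0:ℝ) ≤ ‖v (k+1)‖ := norm_nonneg _
      have hvk : ‖v k‖ ≤ Real.exp (-((1-c) * Real.sqrt (δ ⟨k,hk⟩))) * ‖v (k+1)‖ := by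
        rw [Real.exp_neg, inv_mul_eq_div, le_div_iff₀ (Real.exp_pos _)]
        nlinarith [ihk]
      have hdiff : ‖g (k+1) (v (k+1)) - g k (v (k+1))‖ ≤ b * δ ⟨k,hk⟩ * ‖v (k+1)‖ := by
        have heq : g (k+1) (v (k+1)) - g k (v (k+1))
            = (Matrix.toEuclideanCLM (𝕜 := ℂ) (A ⟨k+1,h⟩ - A ⟨k,hk⟩)) (v (k+1)) := by
          rw [map_sub, hg (k+1) h, hg k hk, ContinuousLinearMap.sub_apply]
        rw [heq]
        exact le_trans (ContinuousLinearMap.le_opNorm _ _)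
          (mul_le_mul_of_nonneg_right (hAstep k h) (norm_nonneg _))
      have h1 := expand k hk (v k)
      rw [← hvs k] at h1
      have h2 : ‖g k (v (k+1))‖ ≤ ‖g (k+1) (v (k+1))‖ + ‖g (k+1) (v (k+1)) - g k (v (k+1))‖ := by
        calc ‖g k (v (k+1))‖
            = ‖g (k+1) (v (k+1)) - (g (k+1) (v (k+1)) - g k (v (k+1)))‖ := by
              congr 1; abel
          _ ≤ ‖g (k+1) (v (k+1))‖ + ‖g (k+1) (v (k+1)) - g k (v (k+1))‖ := norm_sub_le _ _
      have htr' := htr ⟨k, hk⟩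
      have hkey2 : Real.exp ((1-c) * Real.sqrt (δ ⟨k+1,h⟩))
          ≤ ‖(A ⟨k,hk⟩).trace‖ - Real.exp (-((1-c) * Real.sqrt (δ ⟨k,hk⟩)))
            - b * δ ⟨k,hk⟩ := by linarith
      have hkey3 := mul_le_mul_of_nonneg_right hkey2 hwpos
      have hE := mul_le_mul_of_nonneg_left hvk
        (norm_nonneg (A ⟨k,hk⟩).trace)
      rw [hvs (k+1)]
      nlinarith [hkey3, h1, h2, hdiff, hvk,
        mul_le_mul_of_nonneg_right
          (htr ⟨k, hk⟩ : 2 + (1-b) * δ ⟨k,hk⟩ ≤ ‖(A ⟨k,hk⟩).trace‖) hwpos]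
  -- product bound
  let dd : ℕ → ℝ := fun j => if h : j < n then δ ⟨j, h⟩ else 0
  have prod_bound : ∀ k, k ≤ n →
      Real.exp ((1-c) * ∑ j ∈ Finset.range k, Real.sqrt (dd j)) * ‖u₀‖ ≤ ‖v k‖ := by
    intro k
    induction k with
    | zero => intro _; simp [hv0]
    | succ k ih =>
      intro hk1
      have hk : k < n := Nat.lt_of_succ_le hk1
      have ih' := ih (le_of_lt hk)
      have hddk : dd k = δ ⟨k, hk⟩ := by simp [dd, hk]
      calc Real.exp ((1-c) * ∑ j ∈ Finset.range (k+1), Real.sqrt (dd j)) * ‖u₀‖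
          = Real.exp ((1-c) * Real.sqrt (δ ⟨k,hk⟩))
            * (Real.exp ((1-c) * ∑ j ∈ Finset.range k, Real.sqrt (dd j)) * ‖u₀‖) := by
            rw [Finset.sum_range_succ, hddk, mul_add, Real.exp_add]; ring
        _ ≤ Real.exp ((1-c) * Real.sqrt (δ ⟨k,hk⟩)) * ‖v k‖ :=
            mul_le_mul_of_nonneg_left ih' (Real.exp_pos _).le
        _ ≤ ‖v (k+1)‖ := inv k hk
  -- identify v n with the product
  have hprod : ∀ k (hk : k ≤ n),
      (Matrix.toEuclideanCLM (𝕜 := ℂ)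
        ((List.ofFn (fun i : Fin k => A (Fin.castLE hk i))).reverse.prod)) u₀ = v k := by
    intro k
    induction k with
    | zero =>
      intro hk
      simp only [List.ofFn_zero, List.reverse_nil, List.prod_nil, map_one,
        ContinuousLinearMap.one_apply]
      exact hv0.symm
    | succ k ih =>
      intro hk
      have hk' : k ≤ n := Nat.le_of_succ_le hk
      have hkn : k < n := Nat.lt_of_succ_le hk
      rw [List.ofFn_succ']
      have hfun : (fun i : Fin k => A (Fin.castLE hk i.castSucc))
          = fun i : Fin k => A (Fin.castLE hk' i) := by
        funext i; congr 1
      have hlast : A (Fin.castLE hk (Fin.last k)) = A ⟨k, hkn⟩ := by congr 1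
      simp only [List.concat_eq_append, List.reverse_append, List.reverse_singleton,
        List.singleton_append]
      rw [List.prod_cons, map_mul, ContinuousLinearMap.mul_apply, hfun, hlast, ih hk',
        hvs k, hg k hkn]
  have hfinal := prod_bound n (le_refl n)
  have hpe := hprod n (le_refl n)
  have hAeq : (fun i : Fin n => A (Fin.castLE (le_refl n) i)) = A := by
    funext i; congr 1
  rw [hAeq] at hpe
  rw [hpe]
  have hsum : ∑ j : Fin n, Real.sqrt (δ j) = ∑ j ∈ Finset.range n, Real.sqrt (dd j) := by
    rw [← Fin.sum_univ_eq_sum_range (fun j => Real.sqrt (dd j)) n]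
    refine Finset.sum_congr rfl fun i _ => ?_
    have : dd i.val = δ i := by simp [dd, i.isLt]
    rw [this]
  rw [hsum]
  exact hfinal
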